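/- Let G be a simple graph with no ds-completable card, let i be a vertex set such that V∖i is neighbourly, and let p = (V∖i) ∩ D where D is the set of dull vertices. Then the number of edge-endpoints (stubs) within p satisfies ε(p,p) ≤ n_p(n_p − 2) + τ(i,p), where ε(p,p) is twice the number of edges inside p, n_p = |p|, and τ(i,p) is any upper bound on the number of edges between i and p. -/
import Mathlib


open SimpleGraph Finset
open scoped Classical

variable {V : Type*}

/-- The degree of a vertex `u` in a simple graph `G`. -/
noncomputable def deg (G : SimpleGraph V) (u : V) : ℕ := (G.neighborSet u).ncard

/-- The degree of `u` in the card `G − v` (the vertex-deleted subgraph at `v`). -/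
noncomputable def cardDeg (G : SimpleGraph V) (v u : V) : ℕ := (G.neighborSet u \ {v}).ncard

/-- The card `G − v` is ds-completable: for each degree `d`, the vertices of degree `d`
in `G − v` are either all neighbours of `v` in `G` or all non-neighbours of `v` in `G`. -/
def DsCompletable (G : SimpleGraph V) (v : V) : Prop :=
  ∀ d : ℕ, (∀ u, u ≠ v → cardDeg G v u = d → G.Adj v u) ∨
           (∀ u, u ≠ v → cardDeg G v u = d → ¬ G.Adj v u)

/-- A vertex is bad if the graph contains a vertex of degree one less. -/
def Bad (G : SimpleGraph V) (v : V) : Prop := ∃ w, deg G w + 1 = deg G v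

/-- A vertex is dull if the graph contains a vertex of degree one more. -/
def Dull (G : SimpleGraph V) (v : V) : Prop := ∃ w, deg G w = deg G v + 1

/-- ε(s,t): the number of stubs on `s` used by edges from `s` to `t`
(for disjoint `s`, `t` this is the number of edges between them; for `s = t`
it is twice the number of edges inside `s`). -/
noncomputable def stubs (G : SimpleGraph V) (s t : Finset V) : ℕ :=
  ((s ×ˢ t).filter fun p => G.Adj p.1 p.2).card

/-- A vertex set is neighbourly if no vertex outside the set has a degree one less
than that of a vertex in the set. -/
def Neighbourly (G : SimpleGraph V) (K : Finset V) : Prop :=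
  ∀ u ∉ K, ∀ w ∈ K, deg G u + 1 ≠ deg G w

/-- A vertex set is `d`-neighbourly if it contains a vertex `v` of degree `d` such that
no vertex outside the set has a degree one less than that of any member other than `v`. -/
def DNeighbourly (G : SimpleGraph V) (d : ℕ) (K : Finset V) : Prop :=
  ∃ v ∈ K, deg G v = d ∧ ∀ u ∉ K, ∀ w ∈ K, w ≠ v → deg G u + 1 ≠ deg G w

/-- In a graph with no ds-completable card, if `V∖i` is neighbourly and `p` is the set of
dull vertices in `V∖i`, then `ε(p,p) ≤ n_p(n_p − 2) + τ(i,p)`. -/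
theorem stmt13 [Fintype V] (G : SimpleGraph V)
    (h : ∀ v : V, ¬ DsCompletable G v) (i : Finset V)
    (hnb : Neighbourly G (univ \ i))
    (p : Finset V) (hp : p = (univ \ i).filter fun v => Dull G v)
    (τ : ℕ) (hτ : stubs G i p ≤ τ) :
    stubs G p p ≤ p.card * (p.card - 2) + τ := by
  classical
  -- Key lemma: a vertex of p adjacent to all other vertices of p must have an edge into i.
  have key : ∀ v ∈ p, (∀ w ∈ p, w ≠ v → G.Adj v w) → ∃ u ∈ i, G.Adj v u := by
    intro v hv hfull
    by_contra hno
    push_neg at hno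
    apply h v
    intro d
    by_cases hex : ∃ u', u' ≠ v ∧ cardDeg G v u' = d ∧ ¬ G.Adj v u'
    · right
      intro u hu hd hadj
      obtain ⟨u', hu'v, hd', hu'na⟩ := hex
      have hvmem : v ∈ G.neighborSet u := by
        simpa [SimpleGraph.mem_neighborSet] using hadj.symm
      have hdegu : deg G u = d + 1 := by
        have hfin : (G.neighborSet u).Finite := Set.toFinite _
        have h1 := Set.ncard_diff_singleton_add_one hvmem hfin
        unfold cardDeg at hd
        unfold deg
        omega
      have hdegu' : deg G u' = d := by
        have hv' : v ∉ G.neighborSet u' := by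
          simp only [SimpleGraph.mem_neighborSet]
          intro hadj'; exact hu'na hadj'.symm
        unfold cardDeg at hd'
        rw [Set.diff_singleton_eq_self hv'] at hd'
        exact hd'
      have hui : u ∉ i := fun hui => hno u hui hadj
      by_cases hu'i : u' ∈ i
      · exact hnb u' (by simp [hu'i]) u (by simp [hui]) (by omega)
      · have hu'p : u' ∈ p := by
          rw [hp]
          exact Finset.mem_filter.mpr ⟨by simp [hu'i], ⟨u, by omega⟩⟩
        exact hu'na (hfull u' hu'p hu'v)
    · left
      push_neg at hex
      exact hex
  have hstub : stubs G p p = ∑ v ∈ p, (p.filter (G.Adj v)).card := by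
    unfold stubs
    rw [Finset.card_filter, Finset.sum_product]
    exact Finset.sum_congr rfl fun v _ => (Finset.card_filter _ _).symm
  set Full := p.filter (fun v => ∀ w ∈ p, w ≠ v → G.Adj v w) with hF
  have hb : ∀ v ∈ p,
      (p.filter (G.Adj v)).card ≤ (p.card - 2) + (if v ∈ Full then 1 else 0) := by
    intro v hv
    by_cases hvF : v ∈ Full
    · simp only [hvF, if_true]
      have hsub : p.filter (G.Adj v) ⊆ p.erase v := by
        intro w hw
        simp only [Finset.mem_filter] at hw
        exact Finset.mem_erase.mpr ⟨fun hwv => G.irrefl (hwv ▸ hw.2), hw.1⟩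
      have hle := Finset.card_le_card hsub
      rw [Finset.card_erase_of_mem hv] at hle
      omega
    · simp only [hvF, if_false]
      have hnall : ¬ (∀ w ∈ p, w ≠ v → G.Adj v w) := by
        intro hall; exact hvF (Finset.mem_filter.mpr ⟨hv, hall⟩)
      push_neg at hnall
      obtain ⟨w, hwp, hwv, hna⟩ := hnall
      have hsub : p.filter (G.Adj v) ⊆ (p.erase v).erase w := by
        intro x hx
        simp only [Finset.mem_filter] at hx
        refine Finset.mem_erase.mpr ⟨?_,
          Finset.mem_erase.mpr ⟨fun hxv => G.irrefl (hxv ▸ hx.2), hx.1⟩⟩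
        rintro rfl; exact hna hx.2
      have hle := Finset.card_le_card hsub
      rw [Finset.card_erase_of_mem (Finset.mem_erase.mpr ⟨hwv, hwp⟩),
        Finset.card_erase_of_mem hv] at hle
      omega
  have hFull : Full.card ≤ stubs G i p := by
    have hsub : Full ⊆ ((i ×ˢ p).filter fun q => G.Adj q.1 q.2).image Prod.snd := by
      intro v hvF
      have hv : v ∈ p := Finset.mem_of_mem_filter v hvF
      have hfull := (Finset.mem_filter.mp hvF).2
      obtain ⟨u, hui, hadj⟩ := key v hv hfull
      exact Finset.mem_image.mpr ⟨(u, v),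
        Finset.mem_filter.mpr ⟨Finset.mem_product.mpr ⟨hui, hv⟩, hadj.symm⟩, rfl⟩
    calc Full.card ≤ _ := Finset.card_le_card hsub
      _ ≤ _ := Finset.card_image_le
  have hsum : ∑ v ∈ p, ((p.card - 2) + (if v ∈ Full then 1 else 0))
      = p.card * (p.card - 2) + Full.card := by
    rw [Finset.sum_add_distrib, Finset.sum_const, smul_eq_mul]
    rw [← Finset.card_filter]
    congr 1
    rw [Finset.filter_mem_eq_inter, Finset.inter_eq_right.mpr (Finset.filter_subset _ _)]
  calc stubs G p p = ∑ v ∈ p, (p.filter (G.Adj v)).card := hstub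
    _ ≤ ∑ v ∈ p, ((p.card - 2) + (if v ∈ Full then 1 else 0)) := Finset.sum_le_sum hb
    _ = p.card * (p.card - 2) + Full.card := hsum
    _ ≤ p.card * (p.card - 2) + τ := by
        exact Nat.add_le_add_left (le_trans hFull hτ) _
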